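/- If S and T are left C4*-rings, then the direct product ring S × T is a left C4*-ring. -/

import Mathlib

open MulOpposite

section C4Defs

/-- A submodule is a direct summand if it has a complement. -/
def IsDirectSummand {R M : Type*} [Ring R] [AddCommGroup M] [Module R M]
    (A : Submodule R M) : Prop :=
  ∃ B : Submodule R M, IsCompl A B

/-- `M` is a `C4`-module over `R`: for every internal direct sum decomposition `M = A ⊕ B`
and every homomorphism `f : A → B` whose kernel is a direct summand of `A`, the image of `f`
is a direct summand of `B`. -/
def IsC4Module (R M : Type*) [Ring R] [AddCommGroup M] [Module R M] : Prop :=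
  ∀ A B : Submodule R M, IsCompl A B → ∀ f : A →ₗ[R] B,
    IsDirectSummand (LinearMap.ker f) → IsDirectSummand (LinearMap.range f)

/-- `M` is a `C4*`-module: every submodule of `M` is a `C4`-module. -/
def IsC4StarModule (R M : Type*) [Ring R] [AddCommGroup M] [Module R M] : Prop :=
  ∀ N : Submodule R M, IsC4Module R N

/-- `M` is square-free: no nonzero submodules `A`, `B` with `A ⊓ B = ⊥` and `A ≅ B`. -/
def IsSquareFreeModule (R M : Type*) [Ring R] [AddCommGroup M] [Module R M] : Prop :=
  ∀ A B : Submodule R M, A ≠ ⊥ → B ≠ ⊥ → A ⊓ B = ⊥ → IsEmpty (A ≃ₗ[R] B)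

/-- `M` is summand-square-free: no nonzero direct summands `A`, `B` with `A ⊓ B = ⊥`
and `A ≅ B`. -/
def IsSummandSquareFree (R M : Type*) [Ring R] [AddCommGroup M] [Module R M] : Prop :=
  ∀ A B : Submodule R M, IsDirectSummand A → IsDirectSummand B →
    A ≠ ⊥ → B ≠ ⊥ → A ⊓ B = ⊥ → IsEmpty (A ≃ₗ[R] B)

/-- `X` is an essential submodule of `A`. -/
def IsEssentialIn {R M : Type*} [Ring R] [AddCommGroup M] [Module R M]
    (X A : Submodule R M) : Prop :=
  X ≤ A ∧ ∀ N : Submodule R M, N ≤ A → N ≠ ⊥ → X ⊓ N ≠ ⊥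

/-- A triple `(X, Y, f)` where `X`, `Y` are semisimple direct summands of `M` with
`X ⊓ Y = ⊥` and `f : X ≅ Y` an isomorphism.  These are the elements of the poset `S(M)`
from the definition of semi-weak-CS modules. -/
structure SWTriple (R M : Type*) [Ring R] [AddCommGroup M] [Module R M] where
  X : Submodule R M
  Y : Submodule R M
  semisimpleX : IsSemisimpleModule R X
  semisimpleY : IsSemisimpleModule R Y
  summandX : IsDirectSummand X
  summandY : IsDirectSummand Y
  disj : X ⊓ Y = ⊥
  f : X ≃ₗ[R] Y

/-- The extension order on the poset `S(M)` of triples: `(X₁,Y₁,f₁) ≤ (X₂,Y₂,f₂)` iff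
`X₁ ≤ X₂`, `Y₁ ≤ Y₂` and `f₂` restricts to `f₁` on `X₁`. -/
def SWTriple.Extends {R M : Type*} [Ring R] [AddCommGroup M] [Module R M]
    (t s : SWTriple R M) : Prop :=
  ∃ hX : t.X ≤ s.X, t.Y ≤ s.Y ∧
    ∀ x : t.X, (s.f ⟨x.1, hX x.2⟩ : M) = (t.f x : M)

/-- `M` is semi-weak-CS: for every chain in the poset `S(M)`, with `X` the union of the first
components and `Y` the union of the second components, there are direct summands `A`, `B`
of `M` with `X` essential in `A` and `Y` essential in `B`. -/
def IsSemiWeakCS (R M : Type*) [Ring R] [AddCommGroup M] [Module R M] : Prop :=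
  ∀ C : Set (SWTriple R M), IsChain SWTriple.Extends C →
    ∃ A B : Submodule R M, IsDirectSummand A ∧ IsDirectSummand B ∧
      IsEssentialIn (⨆ t ∈ C, t.X) A ∧ IsEssentialIn (⨆ t ∈ C, t.Y) B

/-- `M` is strongly `C4*` if it is both semi-weak-CS and `C4*`. -/
def IsStronglyC4StarModule (R M : Type*) [Ring R] [AddCommGroup M] [Module R M] : Prop :=
  IsSemiWeakCS R M ∧ IsC4StarModule R M

/-- `R` is a right `C4*`-ring: the right regular module `R_R` (i.e. `R` as a module over
`Rᵐᵒᵖ`) is a `C4*`-module. -/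
def IsRightC4StarRing (R : Type*) [Ring R] : Prop := IsC4StarModule Rᵐᵒᵖ R

/-- `R` is a left `C4*`-ring: the left regular module `_RR` is a `C4*`-module. -/
def IsLeftC4StarRing (R : Type*) [Ring R] : Prop := IsC4StarModule R R

/-- `R` is a strongly right `C4*`-ring. -/
def IsStronglyRightC4StarRing (R : Type*) [Ring R] : Prop := IsStronglyC4StarModule Rᵐᵒᵖ R

/-- `R` is a strongly left `C4*`-ring. -/
def IsStronglyLeftC4StarRing (R : Type*) [Ring R] : Prop := IsStronglyC4StarModule R R

/-- `R` is right semi-weak-CS. -/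
def IsRightSemiWeakCSRing (R : Type*) [Ring R] : Prop := IsSemiWeakCS Rᵐᵒᵖ R

/-- `R` is left semi-weak-CS. -/
def IsLeftSemiWeakCSRing (R : Type*) [Ring R] : Prop := IsSemiWeakCS R R

/-- The left square-free transfer condition `LSF`: if the right regular module `T_T` is
summand-square-free then the left regular module `_TT` is square-free. -/
def LSF (T : Type*) [Ring T] : Prop :=
  IsSummandSquareFree Tᵐᵒᵖ T → IsSquareFreeModule T T

end C4Defs

section Corner

variable {T : Type*} [Ring T]

/-- The corner `eTe = {x : T | e * x = x ∧ x * e = x}` as a non-unital subring. -/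
def cornerSubring (e : T) : NonUnitalSubring T where
  carrier := {x : T | e * x = x ∧ x * e = x}
  add_mem' := by
    rintro a b ⟨ha1, ha2⟩ ⟨hb1, hb2⟩
    exact ⟨by rw [mul_add, ha1, hb1], by rw [add_mul, ha2, hb2]⟩
  zero_mem' := ⟨mul_zero e, zero_mul e⟩
  neg_mem' := by
    rintro a ⟨ha1, ha2⟩
    exact ⟨by rw [mul_neg, ha1], by rw [neg_mul, ha2]⟩
  mul_mem' := by
    rintro a b ⟨ha1, ha2⟩ ⟨hb1, hb2⟩
    exact ⟨by rw [← mul_assoc, ha1], by rw [mul_assoc, hb2]⟩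

theorem mem_cornerSubring {e x : T} :
    x ∈ cornerSubring e ↔ e * x = x ∧ x * e = x := Iff.rfl

/-- The corner ring `eTe` associated to an idempotent `e` of `T`; its identity is `e`. -/
def Corner (e : T) (he : IsIdempotentElem e) : Type _ := ↥(cornerSubring e)

instance {e : T} {he : IsIdempotentElem e} : Ring (Corner e he) :=
  { (inferInstanceAs (NonUnitalRing ↥(cornerSubring e)) : NonUnitalRing ↥(cornerSubring e)) with
    one := ⟨e, he, he⟩
    one_mul := fun x => Subtype.ext (mem_cornerSubring.mp x.2).1
    mul_one := fun x => Subtype.ext (mem_cornerSubring.mp x.2).2 }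

/-- `eT = {x : T | e * x = x}` as an additive subgroup; it is a left module over the
corner ring `eTe`. -/
def leftPart (e : T) : AddSubgroup T where
  carrier := {x : T | e * x = x}
  add_mem' := by
    intro a b ha hb
    simp only [Set.mem_setOf_eq] at *
    rw [mul_add, ha, hb]
  zero_mem' := mul_zero e
  neg_mem' := by
    intro a ha
    simp only [Set.mem_setOf_eq] at *
    rw [mul_neg, ha]

/-- `Te = {x : T | x * e = x}` as an additive subgroup; it is a right module over the
corner ring `eTe`. -/
def rightPart (e : T) : AddSubgroup T where
  carrier := {x : T | x * e = x}
  add_mem' := by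
    intro a b ha hb
    simp only [Set.mem_setOf_eq] at *
    rw [add_mul, ha, hb]
  zero_mem' := zero_mul e
  neg_mem' := by
    intro a ha
    simp only [Set.mem_setOf_eq] at *
    rw [neg_mul, ha]

theorem mem_leftPart {e x : T} : x ∈ leftPart e ↔ e * x = x := Iff.rfl

theorem mem_rightPart {e x : T} : x ∈ rightPart e ↔ x * e = x := Iff.rfl

/-- `eT` is a (unital) left module over the corner ring `eTe`. -/
instance {e : T} {he : IsIdempotentElem e} : Module (Corner e he) ↥(leftPart e) where
  smul c x := ⟨c.1 * x.1, by
    have h1 : e * c.1 = c.1 := (mem_cornerSubring.mp c.2).1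
    show e * (c.1 * x.1) = c.1 * x.1
    rw [← mul_assoc, h1]⟩
  one_smul x := Subtype.ext (by
    show e * x.1 = x.1
    exact mem_leftPart.mp x.2)
  mul_smul a b x := Subtype.ext (by
    show (a.1 * b.1) * x.1 = a.1 * (b.1 * x.1)
    rw [mul_assoc])
  smul_zero a := Subtype.ext (by
    show a.1 * 0 = 0
    exact mul_zero _)
  smul_add a x y := Subtype.ext (by
    show a.1 * (x.1 + y.1) = a.1 * x.1 + a.1 * y.1
    exact mul_add _ _ _)
  add_smul a b x := Subtype.ext (by
    show (a.1 + b.1) * x.1 = a.1 * x.1 + b.1 * x.1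
    exact add_mul _ _ _)
  zero_smul x := Subtype.ext (by
    show (0 : T) * x.1 = 0
    exact zero_mul _)

/-- `Te` is a (unital) right module over the corner ring `eTe`, i.e. a module over
`(eTe)ᵐᵒᵖ`. -/
instance {e : T} {he : IsIdempotentElem e} : Module (Corner e he)ᵐᵒᵖ ↥(rightPart e) where
  smul c x := ⟨x.1 * (unop c).1, by
    have h2 : (unop c).1 * e = (unop c).1 := (mem_cornerSubring.mp (unop c).2).2
    show (x.1 * (unop c).1) * e = x.1 * (unop c).1
    rw [mul_assoc, h2]⟩
  one_smul x := Subtype.ext (by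
    show x.1 * e = x.1
    exact mem_rightPart.mp x.2)
  mul_smul a b x := Subtype.ext (by
    show x.1 * ((unop b).1 * (unop a).1) = (x.1 * (unop b).1) * (unop a).1
    rw [mul_assoc])
  smul_zero a := Subtype.ext (by
    show (0 : T) * (unop a).1 = 0
    exact zero_mul _)
  smul_add a x y := Subtype.ext (by
    show (x.1 + y.1) * (unop a).1 = x.1 * (unop a).1 + y.1 * (unop a).1
    exact add_mul _ _ _)
  add_smul a b x := Subtype.ext (by
    show x.1 * ((unop a).1 + (unop b).1) = x.1 * (unop a).1 + x.1 * (unop b).1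
    exact mul_add _ _ _)
  zero_smul x := Subtype.ext (by
    show x.1 * (0 : T) = 0
    exact mul_zero _)

/-- The hereditary side-transfer condition `HST`: for every idempotent `e` of `T`, if the
module `eT`/`Te` is summand-square-free as a right `eTe`-module (formalized on the carrier
`Te = rightPart e`, which carries the unital right `eTe`-action; at `e = 1` this is the right
regular module `T_T`), then the left `eTe`-module (carrier `eT = leftPart e`, carrying the
unital left `eTe`-action; at `e = 1` this is the left regular module `_TT`) is square-free. -/
def HST (T : Type*) [Ring T] : Prop :=
  ∀ (e : T) (he : IsIdempotentElem e),
    IsSummandSquareFree (Corner e he)ᵐᵒᵖ ↥(rightPart e) →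
      IsSquareFreeModule (Corner e he) ↥(leftPart e)

/-- The corner-stability axiom `CSA`: for every idempotent `e` of `T`, the left regular
module of the corner ring `eTe` is semi-weak-CS. -/
def CSA' (T : Type*) [Ring T] : Prop :=
  ∀ (e : T) (he : IsIdempotentElem e),
    IsSemiWeakCS (Corner e he) (Corner e he)

end Corner

section SymmetryDatum

/-- A right-to-left symmetry datum on `R`: a ring decomposition `R ≅ S × T` where `S` is
semisimple artinian, the right regular module `T_T` is summand-square-free, the two ideals
`S`, `T` are orthogonal as right `R`-modules (no nonzero isomorphic right `R`-submodules),
and `T` satisfies `HST` and `CSA`. -/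
structure RightToLeftSymmetryDatum (R S T : Type*) [Ring R] [Ring S] [Ring T] where
  iso : R ≃+* S × T
  semisimpleArtinian : IsSemisimpleRing S
  ssf : IsSummandSquareFree Tᵐᵒᵖ T
  orthogonal : ∀ A B : Submodule Rᵐᵒᵖ R,
    (∀ a ∈ A, (iso a).2 = 0) → (∀ b ∈ B, (iso b).1 = 0) →
    A ≠ ⊥ → B ≠ ⊥ → IsEmpty (A ≃ₗ[Rᵐᵒᵖ] B)
  hst : HST T
  csa : CSA' T

end SymmetryDatum

section Beta

variable (R : Type*) [Ring R]

/-- The right annihilator `r_R(P) = {s : R | P s = 0}` of a right submodule `P` of `R`. -/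
def rightAnnSet (P : Submodule Rᵐᵒᵖ R) : Set R := {s : R | ∀ p ∈ P, p * s = 0}

/-- The annihilator-bidual `β_r(P) = ℓ_R(r_R(P))`, as a right ideal of `R`. -/
def betaR (P : Submodule Rᵐᵒᵖ R) : Submodule Rᵐᵒᵖ R where
  carrier := {r : R | ∀ s ∈ rightAnnSet R P, r * s = 0}
  add_mem' := by
    intro a b ha hb
    intro s hs
    rw [add_mul, ha s hs, hb s hs, add_zero]
  zero_mem' := by
    intro s hs
    exact zero_mul s
  smul_mem' := by
    intro c x hx s hs
    show (x * unop c) * s = 0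
    rw [mul_assoc]
    refine hx _ ?_
    intro p hp
    rw [← mul_assoc]
    exact hs (p * unop c) (Submodule.smul_mem P c hp)

/-- A right ideal is a two-sided ideal which is a ring direct summand of `R` iff it is of
the form `cR` for a central idempotent `c`. -/
def IsRingDirectSummandIdeal {R : Type*} [Ring R] (I : Submodule Rᵐᵒᵖ R) : Prop :=
  ∃ c : R, IsIdempotentElem c ∧ (∀ r : R, c * r = r * c) ∧ (∀ x : R, x ∈ I ↔ c * x = x)

/-- `R` has right semisimple annihilator asymmetry. -/
def HasRightSemisimpleAnnihilatorAsymmetry (R : Type*) [Ring R] : Prop :=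
  ∃ P : Submodule Rᵐᵒᵖ R, IsSemisimpleModule Rᵐᵒᵖ P ∧ IsDirectSummand P ∧
    (¬ IsSemisimpleModule Rᵐᵒᵖ (betaR R P) ∨
     (IsSemisimpleModule Rᵐᵒᵖ (betaR R P) ∧ ¬ IsRingDirectSummandIdeal (betaR R P)) ∨
     ¬ IsEssentialIn P (betaR R P))

end Beta

section ProofHelpers

section Helpers
variable {R M : Type*} [Ring R] [AddCommGroup M] [Module R M]

/-- If `Z ≤ W` and `Z` is a summand of `M`, then `Z` (viewed in `W`) is a summand of `W`. -/
theorem summand_comap_subtype (W Z : Submodule R M) (hZW : Z ≤ W)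
    (hZ : IsDirectSummand Z) : IsDirectSummand (Z.comap W.subtype) := by
  obtain ⟨D, hD⟩ := hZ
  refine ⟨D.comap W.subtype, ?_, ?_⟩
  · rw [disjoint_iff, eq_bot_iff]
    rintro x ⟨h1, h2⟩
    have hx : (x : M) ∈ Z ⊓ D := ⟨h1, h2⟩
    rw [hD.inf_eq_bot] at hx
    exact (Submodule.mem_bot _).mpr (Subtype.ext hx)
  · rw [codisjoint_iff, eq_top_iff]
    rintro x -
    have hx : (x : M) ∈ Z ⊔ D := hD.sup_eq_top ▸ Submodule.mem_top
    obtain ⟨z, hz, d, hd, hzd⟩ := Submodule.mem_sup.mp hx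
    have hzW : z ∈ W := hZW hz
    have hdW : d ∈ W := by
      have : d = (x : M) - z := by rw [← hzd]; abel
      rw [this]; exact W.sub_mem x.2 hzW
    refine Submodule.mem_sup.mpr ⟨⟨z, hzW⟩, hz, ⟨d, hdW⟩, hd, ?_⟩
    exact Subtype.ext hzd

/-- If `W` is a summand of `M` and `X` is a summand of `W`, then the image of `X` in `M`
is a summand of `M`. -/
theorem summand_map_subtype (W : Submodule R M) (hW : IsDirectSummand W)
    (X : Submodule R W) (hX : IsDirectSummand X) :
    IsDirectSummand (X.map W.subtype) := by
  obtain ⟨U, hU⟩ := hW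
  obtain ⟨Y, hY⟩ := hX
  refine ⟨Y.map W.subtype ⊔ U, ?_, ?_⟩
  · rw [disjoint_iff, eq_bot_iff]
    rintro m ⟨h1, h2⟩
    obtain ⟨y, hy, u, hu, hyu⟩ := Submodule.mem_sup.mp h2
    have hmW : m ∈ W := by
      obtain ⟨x, _, hx⟩ := h1
      rw [← hx]; exact x.2
    have hyW : y ∈ W := by
      obtain ⟨y', _, hy'⟩ := hy
      rw [← hy']; exact y'.2
    have huW : u ∈ W := by
      have : u = m - y := by rw [← hyu]; abel
      rw [this]; exact W.sub_mem hmW hyW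
    have hu0 : u = 0 := by
      have : u ∈ W ⊓ U := ⟨huW, hu⟩
      rwa [hU.inf_eq_bot, Submodule.mem_bot] at this
    have hmy : m = y := by rw [← hyu, hu0, add_zero]
    obtain ⟨x, hxX, hx⟩ := h1
    obtain ⟨y', hy'Y, hy'⟩ := hy
    simp only [Submodule.subtype_apply] at hx hy'
    have : x = y' := Subtype.ext (by rw [hx, hmy, ← hy'])
    have : x ∈ X ⊓ Y := ⟨hxX, this ▸ hy'Y⟩
    rw [hY.inf_eq_bot, Submodule.mem_bot] at this
    rw [Submodule.mem_bot, ← hx, this]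
    rfl
  · rw [codisjoint_iff, eq_top_iff]
    rintro m -
    have hm : m ∈ W ⊔ U := hU.sup_eq_top ▸ Submodule.mem_top
    obtain ⟨w, hw, u, hu, hwu⟩ := Submodule.mem_sup.mp hm
    have hw' : (⟨w, hw⟩ : W) ∈ X ⊔ Y := hY.sup_eq_top ▸ Submodule.mem_top
    obtain ⟨x, hx, y, hy, hxy⟩ := Submodule.mem_sup.mp hw'
    refine Submodule.mem_sup.mpr ⟨(x : M), ⟨x, hx, rfl⟩, (y : M) + u, ?_, ?_⟩
    · exact Submodule.mem_sup.mpr ⟨(y : M), ⟨y, hy, rfl⟩, u, hu, rfl⟩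
    · have : (x : M) + (y : M) = w := by
        have := congrArg (Subtype.val) hxy
        simpa using this
      rw [← add_assoc, this, hwu]

end Helpers

section Transfer
variable {R R' M M' : Type*} [Ring R] [Ring R'] [AddCommGroup M] [Module R M]
  [AddCommGroup M'] [Module R' M']

/-- Transport of a submodule along an additive equivalence with a scalar correspondence. -/
def tsub (φ : M ≃+ M') (h2 : ∀ r' : R', ∃ r : R, ∀ m : M, φ (r • m) = r' • φ m)
    (X : Submodule R M) : Submodule R' M' where
  carrier := {m' | φ.symm m' ∈ X}
  add_mem' := by
    intro a b ha hb
    simp only [Set.mem_setOf_eq, map_add] at *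
    exact X.add_mem ha hb
  zero_mem' := by simp only [Set.mem_setOf_eq, map_zero]; exact X.zero_mem
  smul_mem' := by
    intro r' m' hm'
    obtain ⟨r, hr⟩ := h2 r'
    have key : φ.symm (r' • m') = r • φ.symm m' := by
      apply φ.injective
      rw [hr, φ.apply_symm_apply, φ.apply_symm_apply]
    simp only [Set.mem_setOf_eq] at *
    rw [key]
    exact X.smul_mem r hm'

theorem mem_tsub (φ : M ≃+ M') (h2 : ∀ r' : R', ∃ r : R, ∀ m : M, φ (r • m) = r' • φ m)
    (X : Submodule R M) (m' : M') : m' ∈ tsub φ h2 X ↔ φ.symm m' ∈ X := Iff.rfl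

theorem tsub_isCompl (φ : M ≃+ M') (h2 : ∀ r' : R', ∃ r : R, ∀ m : M, φ (r • m) = r' • φ m)
    {X Y : Submodule R M} (h : IsCompl X Y) : IsCompl (tsub φ h2 X) (tsub φ h2 Y) := by
  constructor
  · rw [disjoint_iff, eq_bot_iff]
    intro m' hm'
    obtain ⟨h1', h2'⟩ := Submodule.mem_inf.mp hm'
    have : φ.symm m' ∈ X ⊓ Y := ⟨(mem_tsub _ _ _ _).mp h1', (mem_tsub _ _ _ _).mp h2'⟩
    rw [h.inf_eq_bot, Submodule.mem_bot] at this
    rw [Submodule.mem_bot]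
    apply φ.symm.injective
    simpa using this
  · rw [codisjoint_iff, eq_top_iff]
    rintro m' -
    have : φ.symm m' ∈ X ⊔ Y := h.sup_eq_top ▸ Submodule.mem_top
    obtain ⟨x, hx, y, hy, hxy⟩ := Submodule.mem_sup.mp this
    refine Submodule.mem_sup.mpr ⟨φ x, ?_, φ y, ?_, ?_⟩
    · rw [mem_tsub]; simpa using hx
    · rw [mem_tsub]; simpa using hy
    · apply φ.symm.injective
      simpa [map_add] using hxy

theorem tsub_summand (φ : M ≃+ M') (h2 : ∀ r' : R', ∃ r : R, ∀ m : M, φ (r • m) = r' • φ m)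
    {X : Submodule R M} (h : IsDirectSummand X) : IsDirectSummand (tsub φ h2 X) := by
  obtain ⟨Y, hY⟩ := h
  exact ⟨tsub φ h2 Y, tsub_isCompl φ h2 hY⟩

/-- Transfer of the C4 property along an additive equivalence with scalar correspondence
in both directions. -/
theorem c4_transfer (φ : M ≃+ M')
    (h1 : ∀ r : R, ∃ r' : R', ∀ m : M, φ (r • m) = r' • φ m)
    (h2 : ∀ r' : R', ∃ r : R, ∀ m : M, φ (r • m) = r' • φ m)
    (hC4 : IsC4Module R M) : IsC4Module R' M' := by
  -- correspondence for φ.symm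
  have h1' : ∀ r : R, ∃ r' : R', ∀ m' : M', φ.symm (r' • m') = r • φ.symm m' := by
    intro r
    obtain ⟨r', hr⟩ := h1 r
    refine ⟨r', fun m' => ?_⟩
    apply φ.injective
    rw [φ.apply_symm_apply, hr, φ.apply_symm_apply]
  have h2' : ∀ r' : R', ∃ r : R, ∀ m' : M', φ.symm (r' • m') = r • φ.symm m' := by
    intro r'
    obtain ⟨r, hr⟩ := h2 r'
    refine ⟨r, fun m' => ?_⟩
    apply φ.injective
    rw [φ.apply_symm_apply, hr, φ.apply_symm_apply]
  intro A' B' hAB' f' hker'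
  set A : Submodule R M := tsub φ.symm h1' A' with hA
  set B : Submodule R M := tsub φ.symm h1' B' with hB
  have memA : ∀ m : M, m ∈ A ↔ φ m ∈ A' := by
    intro m; rw [hA, mem_tsub]; simp
  have memB : ∀ m : M, m ∈ B ↔ φ m ∈ B' := by
    intro m; rw [hB, mem_tsub]; simp
  have hAB : IsCompl A B := tsub_isCompl φ.symm h1' hAB'
  -- the transported map
  let F : A → B := fun x =>
    ⟨φ.symm (f' ⟨φ x.1, (memA x.1).mp x.2⟩ : B').1, by
      rw [memB, φ.apply_symm_apply]; exact (f' _).2⟩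
  have Fadd : ∀ x y : A, F (x + y) = F x + F y := by
    intro x y
    apply Subtype.ext
    show φ.symm _ = φ.symm _ + φ.symm _
    rw [← map_add]
    congr 1
    have : (⟨φ ((x + y) : A).1, (memA _).mp (x + y).2⟩ : A') = ⟨φ x.1, (memA x.1).mp x.2⟩ + ⟨φ y.1, (memA y.1).mp y.2⟩ := by
      apply Subtype.ext
      show φ (x.1 + y.1) = φ x.1 + φ y.1
      exact map_add φ _ _
    rw [this, map_add]
    rfl
  have Fsmul : ∀ (r : R) (x : A), F (r • x) = r • F x := by
    intro r x
    obtain ⟨r', hr⟩ := h1 r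
    apply Subtype.ext
    show φ.symm _ = r • φ.symm _
    have e1 : (⟨φ ((r • x) : A).1, (memA _).mp (r • x).2⟩ : A') = r' • ⟨φ x.1, (memA x.1).mp x.2⟩ := by
      apply Subtype.ext
      show φ (r • x.1) = r' • φ x.1
      exact hr x.1
    rw [e1, map_smul]
    show φ.symm (r' • (f' ⟨φ x.1, _⟩ : B').1) = _
    apply φ.injective
    rw [φ.apply_symm_apply, hr, φ.apply_symm_apply]
  let f : A →ₗ[R] B :=
    { toFun := F
      map_add' := Fadd
      map_smul' := Fsmul }
  -- equivalence between A' and A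
  let χ : A' ≃+ A :=
    { toFun := fun a' => ⟨φ.symm a'.1, by rw [memA, φ.apply_symm_apply]; exact a'.2⟩
      invFun := fun x => ⟨φ x.1, (memA x.1).mp x.2⟩
      left_inv := fun a' => Subtype.ext (by simp)
      right_inv := fun x => Subtype.ext (by simp)
      map_add' := fun a b => Subtype.ext (map_add φ.symm _ _) }
  have χcorr : ∀ r : R, ∃ r' : R', ∀ a' : A', χ (r' • a') = r • χ a' := by
    intro r
    obtain ⟨r', hr⟩ := h1' r
    exact ⟨r', fun a' => Subtype.ext (hr a'.1)⟩
  -- similarly B' ≃+ B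
  let ρ : B ≃+ B' :=
    { toFun := fun x => ⟨φ x.1, (memB x.1).mp x.2⟩
      invFun := fun b' => ⟨φ.symm b'.1, by rw [memB, φ.apply_symm_apply]; exact b'.2⟩
      left_inv := fun x => Subtype.ext (by simp)
      right_inv := fun b' => Subtype.ext (by simp)
      map_add' := fun a b => Subtype.ext (map_add φ _ _) }
  have ρcorr : ∀ r' : R', ∃ r : R, ∀ x : B, ρ (r • x) = r' • ρ x := by
    intro r'
    obtain ⟨r, hr⟩ := h2 r'
    exact ⟨r, fun x => Subtype.ext (hr x.1)⟩
  have hcomm : ∀ x : A, ρ (f x) = f' (χ.symm x) :=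
    fun x => Subtype.ext (φ.apply_symm_apply _)
  have hkerf : LinearMap.ker f = tsub χ χcorr (LinearMap.ker f') := by
    ext x
    rw [mem_tsub, LinearMap.mem_ker, LinearMap.mem_ker, ← hcomm]
    constructor
    · intro h; rw [h, map_zero]
    · intro h; exact ρ.injective (by rw [h, map_zero])
  have hker : IsDirectSummand (LinearMap.ker f) := by
    rw [hkerf]
    exact tsub_summand χ χcorr hker'
  have hrange := hC4 A B hAB f hker
  have hrangef : LinearMap.range f' = tsub ρ ρcorr (LinearMap.range f) := by
    ext y'
    rw [mem_tsub, LinearMap.mem_range, LinearMap.mem_range]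
    constructor
    · rintro ⟨a', ha'⟩
      exact ⟨χ a', ρ.injective (by rw [hcomm, χ.symm_apply_apply, ha', ρ.apply_symm_apply])⟩
    · rintro ⟨x, hx⟩
      exact ⟨χ.symm x, by rw [← hcomm, hx, ρ.apply_symm_apply]⟩
  rw [hrangef]
  exact tsub_summand ρ ρcorr hrange

end Transfer

section Comp
variable {R M : Type*} [Ring R] [AddCommGroup M] [Module R M]

/-- A complement of `X` inside an intermediate submodule `W`, via the modular law. -/
theorem compl_within (W X : Submodule R M) (hXW : X ≤ W) (hX : IsDirectSummand X) :
    ∃ E : Submodule R M, E ≤ W ∧ X ⊓ E = ⊥ ∧ X ⊔ E = W := by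
  obtain ⟨D, hD⟩ := hX
  refine ⟨D ⊓ W, inf_le_right, ?_, ?_⟩
  · rw [eq_bot_iff]
    intro m hm
    obtain ⟨h1, h2⟩ := Submodule.mem_inf.mp hm
    have : m ∈ X ⊓ D := ⟨h1, (Submodule.mem_inf.mp h2).1⟩
    rwa [hD.inf_eq_bot] at this
  · rw [← sup_inf_assoc_of_le D hXW, hD.sup_eq_top, top_inf_eq]

/-- If `X` is a summand of `M`, so is `X ⊓ W` for the `e`-eigenspace `W`. -/
theorem inf_summand (e : R) (he : IsIdempotentElem e)
    (W W' : Submodule R M) (hW : ∀ x : M, x ∈ W ↔ e • x = x)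
    (hW' : ∀ x : M, x ∈ W' ↔ e • x = 0)
    (X : Submodule R M) (hX : IsDirectSummand X) : IsDirectSummand (X ⊓ W) := by
  have hee : ∀ x : M, e • (e • x) = e • x := by
    intro x; rw [← mul_smul, he]
  obtain ⟨D, hD⟩ := hX
  refine ⟨(X ⊓ W') ⊔ D, ?_, ?_⟩
  · rw [disjoint_iff, eq_bot_iff]
    intro m hm
    obtain ⟨hm1, hm2⟩ := Submodule.mem_inf.mp hm
    obtain ⟨hmX, hmW⟩ := Submodule.mem_inf.mp hm1
    obtain ⟨y, hy, d, hd, hyd⟩ := Submodule.mem_sup.mp hm2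
    obtain ⟨hyX, hyW'⟩ := Submodule.mem_inf.mp hy
    have hdX : d ∈ X := by
      have : d = m - y := by rw [← hyd]; abel
      rw [this]; exact X.sub_mem hmX hyX
    have hd0 : d = 0 := by
      have : d ∈ X ⊓ D := ⟨hdX, hd⟩
      rwa [hD.inf_eq_bot, Submodule.mem_bot] at this
    have hmy : m = y := by rw [← hyd, hd0, add_zero]
    have : e • m = m := (hW m).mp hmW
    have h0 : e • m = 0 := hmy ▸ (hW' y).mp hyW'
    rw [Submodule.mem_bot, ← this, h0]
  · rw [codisjoint_iff, eq_top_iff]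
    intro m _
    have hm : m ∈ X ⊔ D := hD.sup_eq_top ▸ Submodule.mem_top
    obtain ⟨x, hx, d, hd, hxd⟩ := Submodule.mem_sup.mp hm
    have h1 : e • x ∈ X ⊓ W := ⟨X.smul_mem e hx, (hW _).mpr (hee x)⟩
    have h2 : x - e • x ∈ (X ⊓ W') ⊔ D :=
      Submodule.mem_sup_left ⟨X.sub_mem hx (X.smul_mem e hx), (hW' _).mpr (by
        rw [smul_sub, hee, sub_self])⟩
    have h3 : d ∈ (X ⊓ W') ⊔ D := Submodule.mem_sup_right hd
    refine Submodule.mem_sup.mpr ⟨e • x, h1, (x - e • x) + d, ((X ⊓ W') ⊔ D).add_mem h2 h3, ?_⟩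
    rw [← add_assoc]
    rw [show e • x + (x - e • x) = x by abel, hxd]

/-- Key component lemma: if the eigenspace `W` of a central idempotent `e` is a C4 module,
then for any C4 test datum on `M`, the `W`-part of the range is a summand of `M`. -/
theorem comp_summand (e : R) (he : IsIdempotentElem e)
    (W W' : Submodule R M) (hW : ∀ x : M, x ∈ W ↔ e • x = x)
    (hW' : ∀ x : M, x ∈ W' ↔ e • x = 0)
    (hC4W : IsC4Module R W)
    (A B : Submodule R M) (hAB : IsCompl A B)
    (f : A →ₗ[R] B) (hker : IsDirectSummand (LinearMap.ker f)) :
    IsDirectSummand ((LinearMap.range f).map B.subtype ⊓ W) := by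
  have hee : ∀ x : M, e • (e • x) = e • x := by
    intro x; rw [← mul_smul, he]
  have hWW' : IsCompl W W' := by
    constructor
    · rw [disjoint_iff, eq_bot_iff]
      intro m hm
      obtain ⟨h1, h2⟩ := Submodule.mem_inf.mp hm
      rw [Submodule.mem_bot, ← (hW m).mp h1, (hW' m).mp h2]
    · rw [codisjoint_iff, eq_top_iff]
      intro m _
      refine Submodule.mem_sup.mpr ⟨e • m, (hW _).mpr (hee m), m - e • m,
        (hW' _).mpr (by rw [smul_sub, hee, sub_self]), by abel⟩
  -- the components of A and B inside W
  set AW : Submodule R W := Submodule.comap W.subtype A with hAWdef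
  set BW : Submodule R W := Submodule.comap W.subtype B with hBWdef
  have hABW : IsCompl AW BW := by
    constructor
    · rw [disjoint_iff, eq_bot_iff]
      intro x hx
      obtain ⟨h1, h2⟩ := Submodule.mem_inf.mp hx
      have : (x : M) ∈ A ⊓ B := ⟨h1, h2⟩
      rw [hAB.inf_eq_bot, Submodule.mem_bot] at this
      exact (Submodule.mem_bot _).mpr (Subtype.ext this)
    · rw [codisjoint_iff, eq_top_iff]
      intro x _
      have hx : (x : M) ∈ A ⊔ B := hAB.sup_eq_top ▸ Submodule.mem_top
      obtain ⟨a, ha, b, hb, hab⟩ := Submodule.mem_sup.mp hx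
      have hxW : e • (x : M) = (x : M) := (hW _).mp x.2
      refine Submodule.mem_sup.mpr ⟨⟨e • a, (hW _).mpr (hee a)⟩, A.smul_mem e ha,
        ⟨e • b, (hW _).mpr (hee b)⟩, B.smul_mem e hb, ?_⟩
      apply Subtype.ext
      show e • a + e • b = (x : M)
      rw [← smul_add, hab, hxW]
  -- the restriction of f to the W-components
  have fval : ∀ a : A, (a : M) ∈ W → ((f a : B) : M) ∈ W := by
    intro a ha
    have h1 : e • a = a := Subtype.ext (by
      show e • (a : M) = (a : M)
      exact (hW _).mp ha)
    have h2 : e • f a = f a := by rw [← map_smul, h1]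
    rw [hW]
    exact congrArg Subtype.val h2
  let FW : AW → BW := fun x =>
    ⟨⟨((f ⟨x.1.1, x.2⟩ : B) : M), fval ⟨x.1.1, x.2⟩ x.1.2⟩, (f ⟨x.1.1, x.2⟩).2⟩
  have FWadd : ∀ x y : AW, FW (x + y) = FW x + FW y := by
    intro x y
    apply Subtype.ext
    apply Subtype.ext
    have h : (⟨(x + y).1.1, (x + y).2⟩ : A) = ⟨x.1.1, x.2⟩ + ⟨y.1.1, y.2⟩ :=
      Subtype.ext rfl
    show ((f ⟨(x + y).1.1, (x + y).2⟩ : B) : M) = _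
    rw [h, map_add]
    rfl
  have FWsmul : ∀ (r : R) (x : AW), FW (r • x) = r • FW x := by
    intro r x
    apply Subtype.ext
    apply Subtype.ext
    have h : (⟨(r • x).1.1, (r • x).2⟩ : A) = r • ⟨x.1.1, x.2⟩ :=
      Subtype.ext rfl
    show ((f ⟨(r • x).1.1, (r • x).2⟩ : B) : M) = _
    rw [h, map_smul]
    rfl
  let fW : AW →ₗ[R] BW := { toFun := FW, map_add' := FWadd, map_smul' := FWsmul }
  -- kernel bookkeeping
  set KM : Submodule R M := (LinearMap.ker f).map A.subtype with hKMdef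
  have hKM : IsDirectSummand KM := summand_map_subtype A ⟨B, hAB⟩ _ hker
  have hKMW : IsDirectSummand (KM ⊓ W) := inf_summand e he W W' hW hW' KM hKM
  set Z : Submodule R W := Submodule.comap W.subtype (KM ⊓ W) with hZdef
  have hZ : IsDirectSummand Z := summand_comap_subtype W (KM ⊓ W) inf_le_right hKMW
  have hKMA : KM ≤ A := Submodule.map_subtype_le A _
  have hZA : Z ≤ AW := by
    intro x hx
    exact hKMA (Submodule.mem_inf.mp hx).1
  have hkerfW : LinearMap.ker fW = Submodule.comap AW.subtype Z := by
    ext x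
    rw [LinearMap.mem_ker, Submodule.mem_comap]
    constructor
    · intro hx
      refine Submodule.mem_inf.mpr ⟨?_, x.1.2⟩
      refine Submodule.mem_map.mpr ⟨⟨x.1.1, x.2⟩, ?_, rfl⟩
      rw [LinearMap.mem_ker]
      apply Subtype.ext
      have := congrArg Subtype.val (congrArg Subtype.val hx)
      exact this
    · intro hx
      obtain ⟨hx1, _⟩ := Submodule.mem_inf.mp hx
      obtain ⟨k, hk, hkx⟩ := Submodule.mem_map.mp hx1
      rw [LinearMap.mem_ker] at hk
      have hkeq : k = ⟨x.1.1, x.2⟩ := Subtype.ext hkx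
      apply Subtype.ext
      apply Subtype.ext
      show ((f ⟨x.1.1, x.2⟩ : B) : M) = 0
      rw [← hkeq, hk]
      rfl
  have hkerW : IsDirectSummand (LinearMap.ker fW) := by
    rw [hkerfW]
    exact summand_comap_subtype AW Z hZA hZ
  -- apply C4 on W
  have hrW := hC4W AW BW hABW fW hkerW
  have hRW : IsDirectSummand ((LinearMap.range fW).map BW.subtype) :=
    summand_map_subtype BW ⟨AW, hABW.symm⟩ _ hrW
  have hRWM : IsDirectSummand (((LinearMap.range fW).map BW.subtype).map W.subtype) :=
    summand_map_subtype W ⟨W', hWW'⟩ _ hRW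
  have heq : ((LinearMap.range fW).map BW.subtype).map W.subtype
      = (LinearMap.range f).map B.subtype ⊓ W := by
    ext m
    constructor
    · intro hm
      obtain ⟨y, hy, hym⟩ := Submodule.mem_map.mp hm
      obtain ⟨z, hz, hzy⟩ := Submodule.mem_map.mp hy
      obtain ⟨x, hx⟩ := LinearMap.mem_range.mp hz
      refine Submodule.mem_inf.mpr ⟨?_, by rw [← hym]; exact y.2⟩
      refine Submodule.mem_map.mpr ⟨f ⟨x.1.1, x.2⟩, LinearMap.mem_range.mpr ⟨_, rfl⟩, ?_⟩
      have h1 : ((f ⟨x.1.1, x.2⟩ : B) : M) = ((z : W) : M) :=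
        congrArg Subtype.val (congrArg Subtype.val hx)
      rw [Submodule.subtype_apply, h1]
      rw [← hym, ← hzy]
      rfl
    · intro hm
      obtain ⟨hm1, hmW⟩ := Submodule.mem_inf.mp hm
      obtain ⟨b, hb, hbm⟩ := Submodule.mem_map.mp hm1
      obtain ⟨a, ha⟩ := LinearMap.mem_range.mp hb
      -- replace a by e • a
      have haW : (((e • a : A) : M)) ∈ W := (hW _).mpr (by
        show e • (e • (a : M)) = e • (a : M)
        exact hee _)
      have haA : ((e • a : A) : M) ∈ A := (e • a : A).2
      set x : AW := ⟨⟨((e • a : A) : M), haW⟩, haA⟩ with hxdef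
      refine Submodule.mem_map.mpr ⟨⟨m, hmW⟩, ?_, rfl⟩
      refine Submodule.mem_map.mpr ⟨⟨⟨m, hmW⟩, by
        show m ∈ B
        rw [← hbm]; exact b.2⟩, ?_, rfl⟩
      refine LinearMap.mem_range.mpr ⟨x, ?_⟩
      apply Subtype.ext
      apply Subtype.ext
      show ((f ⟨x.1.1, x.2⟩ : B) : M) = m
      have hxa : (⟨x.1.1, x.2⟩ : A) = e • a := Subtype.ext rfl
      rw [hxa, map_smul]
      show e • ((f a : B) : M) = m
      have hbm' : ((f a : B) : M) = m := by
        rw [← hbm]; exact congrArg Subtype.val ha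
      rw [hbm']
      exact (hW m).mp hmW
  rw [← heq]
  exact hRWM

end Comp

section PL
variable {R M : Type*} [Ring R] [AddCommGroup M] [Module R M]

/-- If `M = P ⊕ Q` along a central idempotent and both `P`, `Q` are C4, then `M` is C4. -/
theorem pl (e : R) (he : IsIdempotentElem e)
    (P Q : Submodule R M) (hP : ∀ x : M, x ∈ P ↔ e • x = x) (hQ : ∀ x : M, x ∈ Q ↔ e • x = 0)
    (hCP : IsC4Module R P) (hCQ : IsC4Module R Q) : IsC4Module R M := by
  intro A B hAB f hker
  have hee : ∀ x : M, e • (e • x) = e • x := fun x => by rw [← mul_smul, he]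
  have hQ' : ∀ x : M, x ∈ Q ↔ (1 - e) • x = x := by
    intro x
    rw [hQ, sub_smul, one_smul]
    constructor
    · intro h; rw [h, sub_zero]
    · intro h
      have h2 : e • x = x - (x - e • x) := by abel
      rw [h, sub_self] at h2
      exact h2
  have hP' : ∀ x : M, x ∈ P ↔ (1 - e) • x = 0 := by
    intro x
    rw [hP, sub_smul, one_smul, sub_eq_zero]
    exact eq_comm
  have h1 := comp_summand e he P Q hP hQ hCP A B hAB f hker
  have h2 := comp_summand (1 - e) he.one_sub Q P hQ' hP' hCQ A B hAB f hker
  set RM : Submodule R M := (LinearMap.range f).map B.subtype with hRM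
  obtain ⟨EP, hEPle, hEPbot, hEPsup⟩ := compl_within P (RM ⊓ P) inf_le_right h1
  obtain ⟨EQ, hEQle, hEQbot, hEQsup⟩ := compl_within Q (RM ⊓ Q) inf_le_right h2
  have hsummand : IsDirectSummand RM := by
    refine ⟨EP ⊔ EQ, ?_, ?_⟩
    · rw [disjoint_iff, eq_bot_iff]
      intro m hm
      obtain ⟨hmR, hm2⟩ := Submodule.mem_inf.mp hm
      obtain ⟨p, hp, q, hq, hpq⟩ := Submodule.mem_sup.mp hm2
      have hpP : p ∈ P := hEPle hp
      have hqQ : q ∈ Q := hEQle hq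
      have hem : e • m = p := by
        rw [← hpq, smul_add, (hP p).mp hpP, (hQ q).mp hqQ, add_zero]
      have hpRM : p ∈ RM := by rw [← hem]; exact RM.smul_mem e hmR
      have hp0 : p = 0 := by
        have : p ∈ (RM ⊓ P) ⊓ EP := Submodule.mem_inf.mpr ⟨Submodule.mem_inf.mpr ⟨hpRM, hpP⟩, hp⟩
        rwa [hEPbot, Submodule.mem_bot] at this
      have hmq : m = q := by rw [← hpq, hp0, zero_add]
      have hq0 : q = 0 := by
        have : q ∈ (RM ⊓ Q) ⊓ EQ :=
          Submodule.mem_inf.mpr ⟨Submodule.mem_inf.mpr ⟨hmq ▸ hmR, hqQ⟩, hq⟩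
        rwa [hEQbot, Submodule.mem_bot] at this
      rw [Submodule.mem_bot, hmq, hq0]
    · rw [codisjoint_iff, eq_top_iff]
      intro m _
      have h3 : e • m ∈ RM ⊔ (EP ⊔ EQ) := by
        have hm : e • m ∈ P := (hP _).mpr (hee m)
        rw [← hEPsup] at hm
        obtain ⟨u, hu, v, hv, huv⟩ := Submodule.mem_sup.mp hm
        exact Submodule.mem_sup.mpr
          ⟨u, (Submodule.mem_inf.mp hu).1, v, Submodule.mem_sup_left hv, huv⟩
      have h4 : m - e • m ∈ RM ⊔ (EP ⊔ EQ) := by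
        have hm : m - e • m ∈ Q := (hQ _).mpr (by rw [smul_sub, hee, sub_self])
        rw [← hEQsup] at hm
        obtain ⟨u, hu, v, hv, huv⟩ := Submodule.mem_sup.mp hm
        exact Submodule.mem_sup.mpr
          ⟨u, (Submodule.mem_inf.mp hu).1, v, Submodule.mem_sup_right hv, huv⟩
      have h5 := Submodule.add_mem _ h3 h4
      rwa [show e • m + (m - e • m) = m by abel] at h5
  have hRMB : RM ≤ B := Submodule.map_subtype_le B _
  have hfin := summand_comap_subtype B RM hRMB hsummand
  rw [hRM, Submodule.comap_map_eq_of_injective (Submodule.injective_subtype B)] at hfin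
  exact hfin

end PL


end ProofHelpers

/-- If `S` and `T` are left `C4*`-rings, then `S × T` is a left `C4*`-ring. -/
theorem left_product_c4star {S T : Type*} [Ring S] [Ring T]
    (hS : IsLeftC4StarRing S) (hT : IsLeftC4StarRing T) :
    IsLeftC4StarRing (S × T) := by
  intro N
  set e : S × T := (1, 0) with hedef
  have he : IsIdempotentElem e := by
    show e * e = e
    exact Prod.ext (one_mul 1) (zero_mul 0)
  have key : ∀ x : N, ((e • x : N) : S × T) = ((x : S × T).1, 0) := by
    intro x
    show e * (x : S × T) = _
    exact Prod.ext (one_mul _) (zero_mul _)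
  set P : Submodule (S × T) N :=
    { carrier := {x : N | (x : S × T).2 = 0}
      add_mem' := by
        intro a b ha hb
        show ((a : S × T) + (b : S × T)).2 = 0
        show (a : S × T).2 + (b : S × T).2 = 0
        rw [ha, hb, add_zero]
      zero_mem' := rfl
      smul_mem' := by
        intro c x hx
        show (c * (x : S × T)).2 = 0
        show c.2 * (x : S × T).2 = 0
        rw [hx, mul_zero] } with hPdef
  set Q : Submodule (S × T) N :=
    { carrier := {x : N | (x : S × T).1 = 0}
      add_mem' := by
        intro a b ha hb
        show (a : S × T).1 + (b : S × T).1 = 0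
        rw [ha, hb, add_zero]
      zero_mem' := rfl
      smul_mem' := by
        intro c x hx
        show c.1 * (x : S × T).1 = 0
        rw [hx, mul_zero] } with hQdef
  have hP : ∀ x : N, x ∈ P ↔ e • x = x := by
    intro x
    constructor
    · intro hx
      apply Subtype.ext
      rw [key]
      exact Prod.ext rfl ((show (x : S × T).2 = 0 from hx)).symm
    · intro hx
      show (x : S × T).2 = 0
      have h0 : ((x : S × T).1, (0 : T)) = (x : S × T) := by
        rw [← key x, hx]
      exact (congrArg Prod.snd h0).symm
  have hQ : ∀ x : N, x ∈ Q ↔ e • x = 0 := by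
    intro x
    constructor
    · intro hx
      apply Subtype.ext
      rw [key]
      show ((x : S × T).1, (0 : T)) = (0 : S × T)
      exact Prod.ext (show (x : S × T).1 = 0 from hx) rfl
    · intro hx
      show (x : S × T).1 = 0
      have h0 : ((x : S × T).1, (0 : T)) = (0 : S × T) := by
        rw [← key x, hx]
        rfl
      exact congrArg Prod.fst h0
  -- the S-side
  have hCP : IsC4Module (S × T) P := by
    set N1 : Submodule S S :=
      { carrier := {s : S | ((s, 0) : S × T) ∈ N}
        add_mem' := by
          intro a b ha hb
          have h : ((a + b, (0 : T)) : S × T) = (a, 0) + (b, 0) :=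
            Prod.ext rfl (add_zero 0).symm
          show ((a + b, (0 : T)) : S × T) ∈ N
          rw [h]
          exact N.add_mem ha hb
        zero_mem' := N.zero_mem
        smul_mem' := by
          intro c x hx
          have h : ((c * x, (0 : T)) : S × T) = (c, 0) * (x, 0) :=
            Prod.ext rfl (mul_zero 0).symm
          show ((c • x, (0 : T)) : S × T) ∈ N
          rw [smul_eq_mul, h]
          exact N.smul_mem ((c, 0) : S × T) hx } with hN1def
    let φ : N1 ≃+ P :=
      { toFun := fun s => ⟨⟨((s : S), 0), s.2⟩, rfl⟩
        invFun := fun x => ⟨((x : N) : S × T).1, by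
          have h : ((((x : N) : S × T).1, (0 : T)) : S × T) = ((x : N) : S × T) :=
            Prod.ext rfl (show ((x : N) : S × T).2 = 0 from x.2).symm
          show ((((x : N) : S × T).1, (0 : T)) : S × T) ∈ N
          rw [h]
          exact (x : N).2⟩
        left_inv := fun s => Subtype.ext rfl
        right_inv := fun x => Subtype.ext (Subtype.ext
          (Prod.ext rfl (show ((x : N) : S × T).2 = 0 from x.2).symm))
        map_add' := fun a b => Subtype.ext (Subtype.ext (Prod.ext rfl (add_zero 0).symm)) }
    have h1 : ∀ r : S, ∃ r' : S × T, ∀ m : N1, φ (r • m) = r' • φ m := by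
      intro r
      refine ⟨(r, 0), fun m => ?_⟩
      apply Subtype.ext
      apply Subtype.ext
      show ((r • (m : S), (0 : T)) : S × T) = ((r, 0) : S × T) * ((m : S), 0)
      exact Prod.ext rfl (mul_zero 0).symm
    have h2 : ∀ r' : S × T, ∃ r : S, ∀ m : N1, φ (r • m) = r' • φ m := by
      intro r'
      refine ⟨r'.1, fun m => ?_⟩
      apply Subtype.ext
      apply Subtype.ext
      show ((r'.1 • (m : S), (0 : T)) : S × T) = r' * ((m : S), 0)
      exact Prod.ext rfl (mul_zero r'.2).symm
    exact c4_transfer φ h1 h2 (hS N1)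
  -- the T-side
  have hCQ : IsC4Module (S × T) Q := by
    set N2 : Submodule T T :=
      { carrier := {t : T | ((0, t) : S × T) ∈ N}
        add_mem' := by
          intro a b ha hb
          have h : (((0 : S), a + b) : S × T) = (0, a) + (0, b) :=
            Prod.ext (add_zero 0).symm rfl
          show (((0 : S), a + b) : S × T) ∈ N
          rw [h]
          exact N.add_mem ha hb
        zero_mem' := N.zero_mem
        smul_mem' := by
          intro c x hx
          have h : (((0 : S), c * x) : S × T) = (0, c) * (0, x) :=
            Prod.ext (mul_zero 0).symm rfl
          show (((0 : S), c • x) : S × T) ∈ N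
          rw [smul_eq_mul, h]
          exact N.smul_mem ((0, c) : S × T) hx } with hN2def
    let φ : N2 ≃+ Q :=
      { toFun := fun t => ⟨⟨(0, (t : T)), t.2⟩, rfl⟩
        invFun := fun x => ⟨((x : N) : S × T).2, by
          have h : (((0 : S), ((x : N) : S × T).2) : S × T) = ((x : N) : S × T) :=
            Prod.ext (show ((x : N) : S × T).1 = 0 from x.2).symm rfl
          show (((0 : S), ((x : N) : S × T).2) : S × T) ∈ N
          rw [h]
          exact (x : N).2⟩
        left_inv := fun t => Subtype.ext rfl
        right_inv := fun x => Subtype.ext (Subtype.ext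
          (Prod.ext (show ((x : N) : S × T).1 = 0 from x.2).symm rfl))
        map_add' := fun a b => Subtype.ext (Subtype.ext (Prod.ext (add_zero 0).symm rfl)) }
    have h1 : ∀ r : T, ∃ r' : S × T, ∀ m : N2, φ (r • m) = r' • φ m := by
      intro r
      refine ⟨(0, r), fun m => ?_⟩
      apply Subtype.ext
      apply Subtype.ext
      show (((0 : S), r • (m : T)) : S × T) = ((0, r) : S × T) * (0, (m : T))
      exact Prod.ext (mul_zero 0).symm rfl
    have h2 : ∀ r' : S × T, ∃ r : T, ∀ m : N2, φ (r • m) = r' • φ m := by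
      intro r'
      refine ⟨r'.2, fun m => ?_⟩
      apply Subtype.ext
      apply Subtype.ext
      show (((0 : S), r'.2 • (m : T)) : S × T) = r' * (0, (m : T))
      exact Prod.ext (mul_zero r'.1).symm rfl
    exact c4_transfer φ h1 h2 (hT N2)
  exact pl e he P Q hP hQ hCP hCQ
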